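/- Suppose η = ε_{i₀} for some i₀ ∈ D₁ and i ∈ D satisfies a_{bi}·a_{iw} ≥ a_{bw} − ε_{i₀}. Then 0 ≤ (a_{bi}·a_{iw} − a_{bw} + ε_{i₀})/(a_{bi}+1) ≤ ε_{i,i₀} ≤ ε_{i₀}, where ε_{i,i₀} = (a_{bi}·a_{iw} − a_{bi₀}·a_{i₀w})/(a_{bi}+a_{bi₀}+2). -/

import Mathlib

open Finset

noncomputable def epsW (D : Finset ℕ) (hD : D.Nonempty) (b w : ℕ)
    (ab aw : ℕ → ℝ) (abw : ℝ) (v : ℕ → ℝ) : ℝ :=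
  D.sup' hD fun i =>
    max |v b - ab i * v i| (max |v i - aw i * v w| |v b - abw * v w|)

noncomputable def epsi (ab aw : ℕ → ℝ) (abw : ℝ) (i : ℕ) : ℝ :=
  |ab i * aw i - abw| / (ab i + 2)

noncomputable def epsij (ab aw : ℕ → ℝ) (i j : ℕ) : ℝ :=
  |ab i * aw i - ab j * aw j| / (ab i + ab j + 2)

noncomputable def eta (D : Finset ℕ) (hD : D.Nonempty) (ab aw : ℕ → ℝ) (abw : ℝ) : ℝ :=
  (D ×ˢ D).sup' (hD.product hD) fun p =>
    max (epsi ab aw abw p.1) (epsij ab aw p.1 p.2)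

/-- if η = ε_{i₀} with i₀ ∈ D₁ and a_{bi}a_{iw} ≥ a_{bw} − ε_{i₀}, then
0 ≤ (a_{bi}a_{iw} − a_{bw} + ε_{i₀})/(a_{bi}+1) ≤ ε_{i,i₀} ≤ ε_{i₀}. -/
theorem stmt6 (n b w : ℕ) (hn : 3 ≤ n) (hb : b ∈ Icc 1 n) (hw : w ∈ Icc 1 n) (hbw : b ≠ w)
    (ab aw : ℕ → ℝ) (abw : ℝ)
    (hab : ∀ i ∈ Icc 1 n \ {b, w}, 0 < ab i) (haw : ∀ i ∈ Icc 1 n \ {b, w}, 0 < aw i)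
    (habw : 0 < abw)
    (hD : (Icc 1 n \ {b, w}).Nonempty)
    (i0 : ℕ) (hi0 : i0 ∈ Icc 1 n \ {b, w}) (hi0D1 : ab i0 * aw i0 < abw)
    (heta : eta (Icc 1 n \ {b, w}) hD ab aw abw = epsi ab aw abw i0)
    (i : ℕ) (hi : i ∈ Icc 1 n \ {b, w}) (hge : abw - epsi ab aw abw i0 ≤ ab i * aw i) :
    0 ≤ (ab i * aw i - abw + epsi ab aw abw i0) / (ab i + 1) ∧
    (ab i * aw i - abw + epsi ab aw abw i0) / (ab i + 1) ≤ epsij ab aw i i0 ∧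
    epsij ab aw i i0 ≤ epsi ab aw abw i0 := by
  have hai : 0 < ab i := hab i hi
  have hai0 : 0 < ab i0 := hab i0 hi0
  set P := ab i * aw i with hP
  set P0 := ab i0 * aw i0 with hP0
  have hE0 : epsi ab aw abw i0 = (abw - P0) / (ab i0 + 2) := by
    rw [epsi, abs_of_neg (by linarith), hP0]; ring_nf
  set E0 := epsi ab aw abw i0 with hE0def
  have hden0 : (0:ℝ) < ab i0 + 2 := by linarith
  have hE0eq : E0 * (ab i0 + 2) = abw - P0 := by
    rw [hE0]; field_simp
  have hE0pos : 0 ≤ E0 := by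
    rw [hE0]; exact div_nonneg (by linarith) (by linarith)
  -- claim 3
  have hC3 : epsij ab aw i i0 ≤ E0 := by
    rw [← heta, eta]
    have hmem : (i, i0) ∈ (Icc 1 n \ {b, w}) ×ˢ (Icc 1 n \ {b, w}) :=
      Finset.mem_product.mpr ⟨hi, hi0⟩
    have := Finset.le_sup' (fun p : ℕ × ℕ => max (epsi ab aw abw p.1) (epsij ab aw p.1 p.2)) hmem
    exact le_trans (le_max_right _ _) this
  -- P ≥ P0
  have hPP0 : P0 ≤ P := by nlinarith
  have hepsij : epsij ab aw i i0 = (P - P0) / (ab i + ab i0 + 2) := by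
    rw [epsij, abs_of_nonneg (by linarith)]
  have hden : (0:ℝ) < ab i + ab i0 + 2 := by linarith
  have hden1 : (0:ℝ) < ab i + 1 := by linarith
  have hC3' : P - P0 ≤ E0 * (ab i + ab i0 + 2) := by
    rw [hepsij, div_le_iff₀ hden] at hC3; exact hC3
  refine ⟨div_nonneg (by linarith) (by linarith), ?_, hC3⟩
  rw [hepsij, div_le_div_iff₀ hden1 hden]
  nlinarith [hC3', hE0eq, hE0pos, hai.le, hai0.le]
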